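/- Let T be a bounded skew-adjoint Fredholm operator on a real Hilbert space H and F a skew-adjoint unitary on H (F² = -I) anti-commuting with T. Then the Cayley transform Φ(T) = -F(I + TF)(I - TF)⁻¹ is well-defined (I - TF is invertible), skew-adjoint, unitary, and Φ(T)² = -I; moreover ‖π(Φ(T) - F)‖ < 2 in the Calkin algebra. -/

import Mathlib

open RealInnerProductSpace in
theorem aux_isUnit {H : Type*} [NormedAddCommGroup H] [InnerProductSpace ℝ H]
    [CompleteSpace H] (B : H →L[ℝ] H) (hb : ∀ x, ‖x‖ ≤ ‖B x‖)
    (hb' : ∀ x, ‖x‖ ≤ ‖ContinuousLinearMap.adjoint B x‖) :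
    ∃ S : H →L[ℝ] H, B * S = 1 ∧ S * B = 1 := by
  have hinj : Function.Injective ⇑B := by
    intro x y hxy
    have h1 := hb (x - y)
    rw [map_sub, hxy, sub_self, norm_zero] at h1
    have h0 : ‖x - y‖ = 0 := le_antisymm h1 (norm_nonneg _)
    rwa [norm_eq_zero, sub_eq_zero] at h0
  have hanti : AntilipschitzWith 1 ⇑B := by
    refine B.antilipschitz_of_bound ?_
    intro x; simpa using hb x
  have hset : ((LinearMap.range (B : H →ₗ[ℝ] H) : Submodule ℝ H) : Set H) = Set.range ⇑B := by
    ext x; simp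
  have hclosed : IsClosed ((LinearMap.range (B : H →ₗ[ℝ] H) : Submodule ℝ H) : Set H) := by
    rw [hset]; exact hanti.isClosed_range B.uniformContinuous
  haveI : CompleteSpace ↥(LinearMap.range (B : H →ₗ[ℝ] H)) := hclosed.completeSpace_coe
  have horth : (LinearMap.range (B : H →ₗ[ℝ] H))ᗮ = ⊥ := by
    rw [Submodule.eq_bot_iff]
    intro v hv
    have hBv : ContinuousLinearMap.adjoint B v = 0 := by
      have h2 : ⟪B (ContinuousLinearMap.adjoint B v), v⟫ = 0 :=
        hv _ ⟨ContinuousLinearMap.adjoint B v, rfl⟩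
      have h3 : ⟪ContinuousLinearMap.adjoint B v, ContinuousLinearMap.adjoint B v⟫ = 0 := by
        rw [ContinuousLinearMap.adjoint_inner_left, real_inner_comm, h2]
      exact inner_self_eq_zero.mp h3
    have h4 := hb' v
    rw [hBv, norm_zero] at h4
    have h0 : ‖v‖ = 0 := le_antisymm h4 (norm_nonneg _)
    rwa [norm_eq_zero] at h0
  have hsurj : LinearMap.range (B : H →ₗ[ℝ] H) = ⊤ := Submodule.orthogonal_eq_bot_iff.mp horth
  have hU : IsUnit B := ContinuousLinearMap.isUnit_iff_bijective.mpr
    ⟨hinj, LinearMap.range_eq_top.mp hsurj⟩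
  exact ⟨↑hU.unit⁻¹, hU.mul_val_inv, hU.val_inv_mul⟩

theorem aux_comm {R : Type*} [Ring R] {a b s : R} (h1 : a * s = 1) (h2 : s * a = 1)
    (h : a * b = b * a) : s * b = b * s := by
  calc s * b
      = s * (b * 1) := by rw [mul_one]
    _ = s * (b * (a * s)) := by rw [h1]
    _ = s * ((b * a) * s) := by rw [← mul_assoc b a s]
    _ = s * ((a * b) * s) := by rw [← h]
    _ = s * (a * (b * s)) := by rw [mul_assoc a b s]
    _ = (s * a) * (b * s) := by rw [← mul_assoc s a (b * s)]
    _ = b * s := by rw [h2, one_mul]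

theorem aux_calkin {R : Type*} [Ring R] (f a s p : R) (h : (1 - a) * s = 1) :
    -f * ((1 + a) * s) - f - (-(f * p) - f * p) = -(f * (s - p)) - f * (s - p) := by
  have step1 : -f * ((1 + a) * s) - f * ((1 - a) * s) - (-(f * p) - f * p)
      = -(f * (s - p)) - f * (s - p) := by noncomm_ring
  rwa [h, mul_one] at step1

theorem aux_ineq {a b d e C : ℝ} (ha : 0 ≤ a) (hb : 0 ≤ b) (hd : 0 ≤ d) (he : 0 ≤ e)
    (hC : 0 < C) (hby : a ≤ C * b) (hpy : a ^ 2 + b ^ 2 = d ^ 2) (hde : d ≤ e) :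
    a ^ 2 * (C ^ 2 + 1) ≤ C ^ 2 * e ^ 2 := by
  have p1 : a * a ≤ (C * b) * (C * b) := mul_le_mul hby hby ha (by positivity)
  have p2 : d * d ≤ e * e := mul_le_mul hde hde hd he
  have p3 : C ^ 2 * (d * d) ≤ C ^ 2 * (e * e) := mul_le_mul_of_nonneg_left p2 (sq_nonneg C)
  have p4 : C ^ 2 * (a ^ 2 + b ^ 2) = C ^ 2 * d ^ 2 := by rw [hpy]
  nlinarith [p1, p3, p4]

theorem aux_sq {a b r c2 C : ℝ} (ha : 0 ≤ a) (hb : 0 ≤ b) (hr : 0 ≤ r) (hc : 0 < c2)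
    (h6 : a ^ 2 * c2 ≤ C ^ 2 * b ^ 2) (hr2 : r ^ 2 * c2 = C ^ 2) : a ≤ r * b := by
  have h1 : a ^ 2 ≤ (r * b) ^ 2 := by
    have h2 : a ^ 2 * c2 ≤ ((r * b) ^ 2) * c2 := by nlinarith [h6, hr2]
    exact le_of_mul_le_mul_right h2 hc
  calc a = Real.sqrt (a ^ 2) := (Real.sqrt_sq ha).symm
    _ ≤ Real.sqrt ((r * b) ^ 2) := Real.sqrt_le_sqrt h1
    _ = r * b := Real.sqrt_sq (by positivity)

open RealInnerProductSpace ContinuousLinearMap Topology in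
set_option maxHeartbeats 2000000 in
theorem stmt16 {H : Type*} [NormedAddCommGroup H] [InnerProductSpace ℝ H] [CompleteSpace H]
    (T F : H →L[ℝ] H)
    (hTa : ContinuousLinearMap.adjoint T = -T)
    (hTker : FiniteDimensional ℝ ↥(LinearMap.ker (T : H →ₗ[ℝ] H)))
    (hTcoker : FiniteDimensional ℝ (H ⧸ LinearMap.range (T : H →ₗ[ℝ] H)))
    (hFa : ContinuousLinearMap.adjoint F = -F) (hF2 : F * F = -1)
    (hTF : T * F = -(F * T)) :
    ∃ S : H →L[ℝ] H, (1 - T * F) * S = 1 ∧ S * (1 - T * F) = 1 ∧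
      ContinuousLinearMap.adjoint (-F * ((1 + T * F) * S)) = -(-F * ((1 + T * F) * S)) ∧
      ContinuousLinearMap.adjoint (-F * ((1 + T * F) * S)) * (-F * ((1 + T * F) * S)) = 1 ∧
      (-F * ((1 + T * F) * S)) * (-F * ((1 + T * F) * S)) = -1 ∧
      ∃ K : H →L[ℝ] H, IsCompactOperator ⇑K ∧ ‖-F * ((1 + T * F) * S) - F - K‖ < 2 := by
  set A : H →L[ℝ] H := T * F with hAdef
  -- basic star facts
  have hFT : F * T = -(T * F) := by rw [← hAdef, hTF, neg_neg]
  have hAa : ContinuousLinearMap.adjoint A = -A := by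
    rw [hAdef, ← ContinuousLinearMap.star_eq_adjoint, star_mul,
      ContinuousLinearMap.star_eq_adjoint, ContinuousLinearMap.star_eq_adjoint, hFa, hTa,
      neg_mul_neg, hFT]
  have hst1m : star (1 - A) = 1 + A := by
    rw [star_sub, star_one, ContinuousLinearMap.star_eq_adjoint, hAa, sub_neg_eq_add]
  have hst1p : star (1 + A) = 1 - A := by
    rw [star_add, star_one, ContinuousLinearMap.star_eq_adjoint, hAa, ← sub_eq_add_neg]
  -- skew inner
  have hAx : ∀ x : H, ⟪A x, x⟫ = 0 := by
    intro x
    have h1 := ContinuousLinearMap.adjoint_inner_left A x x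
    rw [hAa] at h1
    have h2 : ⟪x, A x⟫ = ⟪A x, x⟫ := real_inner_comm _ _
    simp only [ContinuousLinearMap.neg_apply, inner_neg_left] at h1
    linarith [h1, h2]
  -- norm identities
  have hsqm : ∀ x : H, ‖(1 - A) x‖ ^ 2 = ‖x‖ ^ 2 + ‖A x‖ ^ 2 := by
    intro x
    have h0 : (1 - A) x = x - A x := by
      simp [ContinuousLinearMap.sub_apply]
    rw [h0, norm_sub_sq_real, real_inner_comm, hAx]
    ring
  have hsqp : ∀ x : H, ‖(1 + A) x‖ ^ 2 = ‖x‖ ^ 2 + ‖A x‖ ^ 2 := by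
    intro x
    have h0 : (1 + A) x = x + A x := by
      simp [ContinuousLinearMap.add_apply]
    rw [h0, norm_add_sq_real, real_inner_comm, hAx]
    ring
  have hbm : ∀ x : H, ‖x‖ ≤ ‖(1 - A) x‖ :=
    fun x => by nlinarith [hsqm x, norm_nonneg (A x), norm_nonneg x, norm_nonneg ((1 - A) x)]
  have hbp : ∀ x : H, ‖x‖ ≤ ‖(1 + A) x‖ :=
    fun x => by nlinarith [hsqp x, norm_nonneg (A x), norm_nonneg x, norm_nonneg ((1 + A) x)]
  have hadjm : ContinuousLinearMap.adjoint (1 - A) = 1 + A := by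
    rw [← ContinuousLinearMap.star_eq_adjoint]; exact hst1m
  have hadjp : ContinuousLinearMap.adjoint (1 + A) = 1 - A := by
    rw [← ContinuousLinearMap.star_eq_adjoint]; exact hst1p
  obtain ⟨S, hS1, hS2⟩ := aux_isUnit (1 - A) hbm (by rw [hadjm]; exact hbp)
  obtain ⟨S', hS'1, hS'2⟩ := aux_isUnit (1 + A) hbp (by rw [hadjp]; exact hbm)
  -- star of S
  have hstS : star S = S' := by
    have h7 : star S * (1 + A) = 1 := by
      have := congrArg star hS1
      rwa [star_mul, star_one, hst1m] at this
    calc star S = star S * ((1 + A) * S') := by rw [hS'1, mul_one]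
      _ = (star S * (1 + A)) * S' := by rw [mul_assoc]
      _ = S' := by rw [h7, one_mul]
  -- commutation facts
  have hFA : F * A = -(A * F) := by
    rw [hAdef]
    calc F * (T * F) = (F * T) * F := by rw [mul_assoc]
      _ = (-(T * F)) * F := by rw [hFT]
      _ = -((T * F) * F) := by rw [neg_mul]
  have hF1m : F * (1 - A) = (1 + A) * F := by
    rw [mul_sub, mul_one, hFA, sub_neg_eq_add, add_mul, one_mul]
  have hF1p : F * (1 + A) = (1 - A) * F := by
    rw [mul_add, mul_one, hFA, sub_mul, one_mul, sub_eq_add_neg]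
  have hFS : F * S = S' * F := by
    calc F * S = (S' * (1 + A)) * (F * S) := by rw [hS'2, one_mul]
      _ = S' * ((1 + A) * (F * S)) := by rw [mul_assoc]
      _ = S' * (((1 + A) * F) * S) := by rw [← mul_assoc (1 + A) F S]
      _ = S' * ((F * (1 - A)) * S) := by rw [← hF1m]
      _ = S' * (F * ((1 - A) * S)) := by rw [mul_assoc]
      _ = S' * F := by rw [hS1, mul_one]
  have hFS' : F * S' = S * F := by
    calc F * S' = (S * (1 - A)) * (F * S') := by rw [hS2, one_mul]
      _ = S * ((1 - A) * (F * S')) := by rw [mul_assoc]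
      _ = S * (((1 - A) * F) * S') := by rw [← mul_assoc (1 - A) F S']
      _ = S * ((F * (1 + A)) * S') := by rw [← hF1p]
      _ = S * (F * ((1 + A) * S')) := by rw [mul_assoc]
      _ = S * F := by rw [hS'1, mul_one]
  have hS'c : S' * (1 - A) = (1 - A) * S' :=
    aux_comm hS'1 hS'2 (by noncomm_ring)
  -- the key alternative form of -Φ
  have hcalc : F * ((1 + A) * S) = (S' * (1 - A)) * F := by
    calc F * ((1 + A) * S) = (F * (1 + A)) * S := by rw [← mul_assoc]
      _ = ((1 - A) * F) * S := by rw [hF1p]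
      _ = (1 - A) * (F * S) := by rw [mul_assoc]
      _ = (1 - A) * (S' * F) := by rw [hFS]
      _ = ((1 - A) * S') * F := by rw [← mul_assoc]
      _ = (S' * (1 - A)) * F := by rw [← hS'c]
  -- skew-adjointness of Φ
  have hG1 : ContinuousLinearMap.adjoint (-F * ((1 + A) * S)) = -(-F * ((1 + A) * S)) := by
    rw [← ContinuousLinearMap.star_eq_adjoint, star_mul, star_neg,
      ContinuousLinearMap.star_eq_adjoint F, hFa, neg_neg, star_mul, hstS, hst1p]
    rw [neg_mul, neg_neg, ← hcalc]
  -- Φ² = -1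
  have hG3 : (-F * ((1 + A) * S)) * (-F * ((1 + A) * S)) = -1 := by
    have hXX : (F * ((1 + A) * S)) * (F * ((1 + A) * S)) = -1 := by
      calc (F * ((1 + A) * S)) * (F * ((1 + A) * S))
          = ((S' * (1 - A)) * F) * (F * ((1 + A) * S)) := by rw [hcalc]
        _ = (S' * (1 - A)) * ((F * F) * ((1 + A) * S)) := by
            rw [mul_assoc, ← mul_assoc F F ((1 + A) * S)]
        _ = (S' * (1 - A)) * ((-1 : H →L[ℝ] H) * ((1 + A) * S)) := by rw [hF2]
        _ = -((S' * (1 - A)) * ((1 + A) * S)) := by rw [neg_one_mul, mul_neg]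
        _ = -(S' * (((1 - A) * (1 + A)) * S)) := by rw [mul_assoc, ← mul_assoc (1 - A) (1 + A) S]
        _ = -(S' * (((1 + A) * (1 - A)) * S)) := by rw [show ((1:H →L[ℝ] H) - A) * (1 + A) = (1 + A) * (1 - A) by noncomm_ring]
        _ = -((S' * (1 + A)) * ((1 - A) * S)) := by rw [mul_assoc S' (1 + A) ((1 - A) * S), ← mul_assoc (1 + A) (1 - A) S]
        _ = -1 := by rw [hS'2, hS1, one_mul]
    calc (-F * ((1 + A) * S)) * (-F * ((1 + A) * S))
        = (F * ((1 + A) * S)) * (F * ((1 + A) * S)) := by rw [neg_mul, neg_mul_neg]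
      _ = -1 := hXX
  have hG2 : ContinuousLinearMap.adjoint (-F * ((1 + A) * S)) * (-F * ((1 + A) * S)) = 1 := by
    rw [hG1, neg_mul, hG3, neg_neg]
  refine ⟨S, hS1, hS2, hG1, hG2, hG3, ?_⟩

  -- ===== analytic part =====
  classical
  haveI : CompleteSpace ↥(LinearMap.ker (T : H →ₗ[ℝ] H)) := FiniteDimensional.complete ℝ _
  -- F is an isometry
  have hFF : ContinuousLinearMap.adjoint F * F = 1 := by
    rw [hFa, neg_mul, hF2, neg_neg]
  have hFiso : ∀ x : H, ‖F x‖ = ‖x‖ := by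
    intro x
    have h1 : ContinuousLinearMap.adjoint F (F x) = x := by
      have h2 : ContinuousLinearMap.adjoint F (F x)
          = (ContinuousLinearMap.adjoint F * F) x := rfl
      rw [h2, hFF]; rfl
    have h3 := ContinuousLinearMap.adjoint_inner_left F x (F x)
    rw [h1] at h3
    have h4 : ‖F x‖ ^ 2 = ‖x‖ ^ 2 := by
      rw [← real_inner_self_eq_norm_sq, ← real_inner_self_eq_norm_sq, ← h3]
    calc ‖F x‖ = Real.sqrt (‖F x‖ ^ 2) := (Real.sqrt_sq (norm_nonneg _)).symm
      _ = Real.sqrt (‖x‖ ^ 2) := by rw [h4]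
      _ = ‖x‖ := Real.sqrt_sq (norm_nonneg _)
  -- the kernel of A is finite dimensional
  set N : Submodule ℝ H := LinearMap.ker (A : H →ₗ[ℝ] H) with hNdef
  have hmapN : ∀ x : H, x ∈ N → T (F x) = 0 := by
    intro x hx
    rw [hNdef, LinearMap.mem_ker] at hx
    exact hx
  haveI hNfin : FiniteDimensional ℝ ↥N := by
    refine FiniteDimensional.of_injective
      ((F.toLinearMap.comp N.subtype).codRestrict (LinearMap.ker (T : H →ₗ[ℝ] H))
        (fun x => LinearMap.mem_ker.mpr (hmapN ↑x x.2))) ?_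
    intro x y hxy
    have h1 : F ↑x = F ↑y := congrArg Subtype.val hxy
    have h2 : ‖F ((x : H) - y)‖ = 0 := by rw [map_sub, h1, sub_self, norm_zero]
    rw [hFiso, norm_eq_zero, sub_eq_zero] at h2
    exact Subtype.ext h2
  haveI : CompleteSpace ↥N := FiniteDimensional.complete ℝ _
  set P : H →L[ℝ] H := N.subtypeL.comp (Submodule.orthogonalProjection N) with hPdef
  -- compactness of P
  have hPcomp : IsCompactOperator ⇑P := by
    refine ⟨(N.subtypeL '' Metric.closedBall 0 1 : Set H),
      (isCompact_closedBall (0 : ↥N) 1).image N.subtypeL.continuous, ?_⟩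
    have h0 : (⇑(Submodule.orthogonalProjection N)) ⁻¹' Metric.closedBall 0 1 ∈ 𝓝 (0 : H) := by
      apply ContinuousAt.preimage_mem_nhds (Submodule.orthogonalProjection N).continuous.continuousAt
      rw [map_zero]
      exact Metric.closedBall_mem_nhds _ one_pos
    refine Filter.mem_of_superset h0 ?_
    intro z hz
    exact ⟨Submodule.orthogonalProjection N z, hz, rfl⟩
  -- T is bounded below on the orthogonal complement of its kernel
  set Q : Submodule ℝ H := LinearMap.range (T : H →ₗ[ℝ] H) with hQdef
  obtain ⟨s, hs⟩ := Q.mkQ.exists_rightInverse_of_surjective (Submodule.range_mkQ Q)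
  have hsv : ∀ v, Q.mkQ (s v) = v := fun v => DFunLike.congr_fun hs v
  set W : Submodule ℝ H := LinearMap.range s with hWdef
  haveI : FiniteDimensional ℝ ↥W := inferInstance
  haveI : CompleteSpace ↥W := FiniteDimensional.complete ℝ _
  set H₁ : Submodule ℝ H := (LinearMap.ker (T : H →ₗ[ℝ] H))ᗮ with hH₁def
  haveI : CompleteSpace ↥H₁ := (Submodule.isClosed_orthogonal _).completeSpace_coe
  set g : (↥H₁ × ↥W) →L[ℝ] H := (T.comp H₁.subtypeL).coprod W.subtypeL with hgdef
  have hgapp : ∀ (x : ↥H₁) (w : ↥W), g (x, w) = T ↑x + ↑w := fun x w => rfl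
  have hginj : ∀ p : ↥H₁ × ↥W, g p = 0 → p = 0 := by
    rintro ⟨x, w⟩ hp
    rw [hgapp] at hp
    have hw0 : (w : H) = 0 := by
      obtain ⟨v, hv⟩ := w.2
      have hwQ : (w : H) ∈ Q := by
        have h1 : (w : H) = T (-(x : H)) := by
          rw [map_neg]
          exact (neg_eq_of_add_eq_zero_right hp).symm
        exact ⟨-(x : H), h1.symm⟩
      have h2 : Q.mkQ ↑w = 0 := by
        rwa [Submodule.mkQ_apply, Submodule.Quotient.mk_eq_zero]
      rw [← hv, hsv] at h2
      rw [← hv, h2, map_zero]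
    have hx0 : (x : H) = 0 := by
      have hTx : T ↑x = 0 := by rwa [hw0, add_zero] at hp
      have h0 : ⟪(x : H), (x : H)⟫ = 0 :=
        Submodule.inner_right_of_mem_orthogonal (LinearMap.mem_ker.mpr hTx) x.2
      exact inner_self_eq_zero.mp h0
    rw [Prod.ext_iff]
    exact ⟨Subtype.ext hx0, Subtype.ext hw0⟩
  have hker : LinearMap.ker (g : (↥H₁ × ↥W) →ₗ[ℝ] H) = ⊥ := by
    rw [Submodule.eq_bot_iff]
    intro p hp
    exact hginj p (LinearMap.mem_ker.mp hp)
  have hrng : LinearMap.range (g : (↥H₁ × ↥W) →ₗ[ℝ] H) = ⊤ := by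
    rw [LinearMap.range_eq_top]
    intro y
    have hyQ : y - s (Q.mkQ y) ∈ Q := by
      have h1 : Q.mkQ (y - s (Q.mkQ y)) = 0 := by rw [map_sub, hsv, sub_self]
      rwa [Submodule.mkQ_apply, Submodule.Quotient.mk_eq_zero] at h1
    obtain ⟨u, hu⟩ := hyQ
    obtain ⟨u₀, hu₀, u₁, hu₁, hdec⟩ :=
      Submodule.exists_add_mem_mem_orthogonal (K := LinearMap.ker (T : H →ₗ[ℝ] H)) u
    refine ⟨(⟨u₁, hu₁⟩, ⟨s (Q.mkQ y), LinearMap.mem_range_self s (Q.mkQ y)⟩), ?_⟩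
    rw [ContinuousLinearMap.coe_coe, hgapp]
    have hTu1 : T u₁ = T u := by
      rw [hdec, map_add, show T u₀ = 0 from LinearMap.mem_ker.mp hu₀, zero_add]
    rw [hTu1, show T u = _ from hu]
    simp
  obtain ⟨C, hC1, hT1⟩ : ∃ C : ℝ, 1 ≤ C ∧ ∀ x : H, x ∈ H₁ → ‖x‖ ≤ C * ‖T x‖ := by
    set e := ContinuousLinearEquiv.ofBijective g hker hrng with hedef
    set C : ℝ := max ‖(e.symm : H →L[ℝ] (↥H₁ × ↥W))‖ 1 with hCdef
    refine ⟨C, le_max_right _ _, ?_⟩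
    intro x hx
    set p : ↥H₁ × ↥W := (⟨x, hx⟩, 0) with hpdef
    have hgp : g p = T x := by rw [hpdef, hgapp]; simp
    have hsymm : e.symm (T x) = p := by rw [← hgp]; exact e.symm_apply_apply p
    have h1 : ‖x‖ ≤ ‖p‖ := by rw [hpdef, Prod.norm_def]; exact le_max_left _ _
    calc ‖x‖ ≤ ‖p‖ := h1
      _ = ‖e.symm (T x)‖ := by rw [hsymm]
      _ ≤ ‖(e.symm : H →L[ℝ] (↥H₁ × ↥W))‖ * ‖T x‖ :=
          (e.symm : H →L[ℝ] (↥H₁ × ↥W)).le_opNorm _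
      _ ≤ C * ‖T x‖ := mul_le_mul_of_nonneg_right (le_max_left _ _) (norm_nonneg _)
  have hC0 : (0 : ℝ) < C := lt_of_lt_of_le one_pos hC1
  -- transfer boundedness below to A
  have hFmem : ∀ u : H, u ∈ LinearMap.ker (T : H →ₗ[ℝ] H) → F u ∈ N := by
    intro u hu
    rw [hNdef, LinearMap.mem_ker]
    have hAF : A * F = -T := by rw [hAdef, mul_assoc, hF2, mul_neg_one]
    have h1 : A (F u) = (A * F) u := rfl
    rw [ContinuousLinearMap.coe_coe, h1, hAF]
    simp [show T u = 0 from LinearMap.mem_ker.mp hu]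
  have hA1 : ∀ y : H, y ∈ Nᗮ → ‖y‖ ≤ C * ‖A y‖ := by
    intro y hy
    have hFy : F y ∈ H₁ := by
      rw [hH₁def, Submodule.mem_orthogonal]
      intro u hu
      have h1 := ContinuousLinearMap.adjoint_inner_left F y u
      rw [hFa] at h1
      rw [ContinuousLinearMap.neg_apply, inner_neg_left] at h1
      have h2 : ⟪F u, y⟫ = 0 := Submodule.inner_right_of_mem_orthogonal (hFmem u hu) hy
      rw [← h1, h2, neg_zero]
    have hAy : A y = T (F y) := rfl
    calc ‖y‖ = ‖F y‖ := (hFiso y).symm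
      _ ≤ C * ‖T (F y)‖ := hT1 _ hFy
      _ = C * ‖A y‖ := by rw [← hAy]
  -- the contraction constant
  set c2 : ℝ := C ^ 2 + 1 with hc2
  have hc2pos : 0 < c2 := by positivity
  set r : ℝ := C / Real.sqrt c2 with hrdef
  have hsqrtpos : 0 < Real.sqrt c2 := Real.sqrt_pos.mpr hc2pos
  have hrpos : (0 : ℝ) ≤ r := by positivity
  have hr2 : r ^ 2 * c2 = C ^ 2 := by
    rw [hrdef, div_pow, Real.sq_sqrt hc2pos.le, div_mul_cancel₀ _ (ne_of_gt hc2pos)]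
  have hrlt : r < 1 := by
    rw [hrdef, div_lt_one hsqrtpos]
    have h1 : Real.sqrt (C ^ 2) < Real.sqrt c2 :=
      Real.sqrt_lt_sqrt (sq_nonneg C) (by rw [hc2]; linarith)
    rwa [Real.sqrt_sq hC0.le] at h1
  -- pointwise bound on S - P
  have hbound : ∀ z : H, ‖S z - P z‖ ≤ r * ‖z‖ := by
    intro z
    set y : H := S z - P z with hydef
    have hPz : P z ∈ N := (Submodule.orthogonalProjection N z).2
    have hAPz : A (P z) = 0 := LinearMap.mem_ker.mp hPz
    have h1A : (1 - A) y = z - P z := by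
      have h1 : (1 - A) (S z) = z := by
        have h2 : (1 - A) (S z) = ((1 - A) * S) z := rfl
        rw [h2, hS1]; rfl
      rw [hydef, map_sub, h1]
      have h3 : (1 - A) (P z) = P z - A (P z) := by
        simp [ContinuousLinearMap.sub_apply]
      rw [h3, hAPz, sub_zero]
    have horthz : z - P z ∈ Nᗮ := Submodule.sub_starProjection_mem_orthogonal z
    have hyN : y ∈ Nᗮ := by
      rw [Submodule.mem_orthogonal]
      intro u hu
      have hAu : ContinuousLinearMap.adjoint A u = 0 := by
        rw [hAa]
        simp [show A u = 0 from LinearMap.mem_ker.mp hu]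
      have h3 := ContinuousLinearMap.adjoint_inner_left A y u
      rw [hAu] at h3
      rw [inner_zero_left] at h3
      have h4 : ⟪u, (1 - A) y⟫ = ⟪u, y⟫ - ⟪u, A y⟫ := by
        have h5 : (1 - A) y = y - A y := by simp [ContinuousLinearMap.sub_apply]
        rw [h5, inner_sub_right]
      rw [h1A] at h4
      have h6 : ⟪u, z - P z⟫ = 0 := Submodule.inner_right_of_mem_orthogonal hu horthz
      rw [h6, ← h3] at h4
      linarith [h4]
    have hpy : ‖y‖ ^ 2 + ‖A y‖ ^ 2 = ‖z - P z‖ ^ 2 := by rw [← hsqm y, h1A]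
    have hzP : ‖z - P z‖ ≤ ‖z‖ := by
      have hin : ⟪P z, z - P z⟫ = 0 :=
        Submodule.inner_right_of_mem_orthogonal hPz horthz
      have h5 : ‖z‖ ^ 2 = ‖P z‖ ^ 2 + 2 * ⟪P z, z - P z⟫ + ‖z - P z‖ ^ 2 := by
        conv_lhs => rw [show z = P z + (z - P z) by abel]
        exact norm_add_sq_real _ _
      rw [hin] at h5
      nlinarith [norm_nonneg (P z), norm_nonneg (z - P z), norm_nonneg z]
    have hby : ‖y‖ ≤ C * ‖A y‖ := hA1 y hyN
    have h6 : ‖y‖ ^ 2 * (C ^ 2 + 1) ≤ C ^ 2 * ‖z‖ ^ 2 :=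
      aux_ineq (norm_nonneg y) (norm_nonneg (A y)) (norm_nonneg (z - P z)) (norm_nonneg z)
        hC0 hby hpy hzP
    rw [← hc2] at h6
    exact aux_sq (norm_nonneg y) (norm_nonneg z) hrpos hc2pos h6 hr2
  -- conclusion
  refine ⟨-(F * P) - F * P, ?_, ?_⟩
  · have hFP : IsCompactOperator ⇑(F * P) := by
      have h1 : ⇑(F * P) = ⇑F ∘ ⇑P := rfl
      rw [h1]
      exact hPcomp.continuous_comp F.continuous
    have h2 : ⇑(-(F * P) - F * P) = (⇑(-(F * P)) - ⇑(F * P) : H → H) := by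
      ext z; simp
    rw [h2]
    have h3 : ⇑(-(F * P)) = -⇑(F * P) := by ext z; simp
    rw [h3]
    exact hFP.neg.sub hFP
  · have hkey := aux_calkin F A S P hS1
    rw [hkey]
    have hXle : ‖F * (S - P)‖ ≤ r := by
      apply ContinuousLinearMap.opNorm_le_bound _ hrpos
      intro z
      have h1 : (F * (S - P)) z = F (S z - P z) := rfl
      rw [h1, hFiso]
      exact hbound z
    calc ‖-(F * (S - P)) - F * (S - P)‖
        ≤ ‖-(F * (S - P))‖ + ‖F * (S - P)‖ := norm_sub_le _ _
      _ = ‖F * (S - P)‖ + ‖F * (S - P)‖ := by rw [norm_neg]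
      _ ≤ r + r := add_le_add hXle hXle
      _ < 2 := by linarith
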